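/- A size-balanced infinite noetherian ring is n-rigid for every positive integer n. -/

import Mathlib

open MulOpposite

/-- A ring `R` is `n`-rigid if every homomorphism of right `R`-modules
`Rⁿ → Rⁿ⁻¹` has infinite kernel (right modules as left `Rᵐᵒᵖ`-modules). -/
def IsRigid (R : Type*) [Ring R] (n : ℕ) : Prop :=
  ∀ f : (Fin n → R) →ₗ[Rᵐᵒᵖ] (Fin (n - 1) → R),
    (LinearMap.ker f : Set (Fin n → R)).Infinite

/-- A ring `R` is size-balanced if every finite right ideal of `R` generates a
finite two-sided ideal.  Right ideals are `Rᵐᵒᵖ`-submodules of `R`. -/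
def SizeBalanced (R : Type*) [Ring R] : Prop :=
  ∀ I : Submodule Rᵐᵒᵖ R, (I : Set R).Finite →
    (TwoSidedIdeal.span (I : Set R) : Set R).Finite

section Aux

variable {R : Type*} [Ring R]

/-- `op` as an `Rᵐᵒᵖ`-linear equivalence from `R` to `Rᵐᵒᵖ`. -/
private def opEquivMop (R : Type*) [Ring R] : R ≃ₗ[Rᵐᵒᵖ] Rᵐᵒᵖ where
  toFun := op
  invFun := unop
  map_add' _ _ := rfl
  map_smul' _ _ := rfl
  left_inv _ := rfl
  right_inv _ := rfl

private lemma finite_sup (p q : Submodule Rᵐᵒᵖ R) (hp : (p : Set R).Finite)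
    (hq : (q : Set R).Finite) : ((p ⊔ q : Submodule Rᵐᵒᵖ R) : Set R).Finite := by
  rw [Submodule.coe_sup]; exact hp.add hq

private lemma finite_finsetSup {ι : Type*} (s : Finset ι) (F : ι → Submodule Rᵐᵒᵖ R)
    (h : ∀ i, (F i : Set R).Finite) :
    ((s.sup F : Submodule Rᵐᵒᵖ R) : Set R).Finite := by
  classical
  induction s using Finset.induction with
  | empty => simp
  | insert _ _ hx ih => rw [Finset.sup_insert]; exact finite_sup _ _ (h _) ih

/-- A two-sided ideal as a right submodule. -/
private def tsiToRight (T : TwoSidedIdeal R) : Submodule Rᵐᵒᵖ R where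
  carrier := T
  add_mem' h1 h2 := T.add_mem h1 h2
  zero_mem' := T.zero_mem
  smul_mem' c x hx := by
    show c • x ∈ T
    rw [MulOpposite.smul_eq_mul_unop]
    exact T.mul_mem_right _ _ hx

private lemma exists_ideal (hsb : SizeBalanced R) {k : ℕ}
    (M : Submodule Rᵐᵒᵖ (Fin k → R)) (hM : (M : Set (Fin k → R)).Finite)
    (J0 : Submodule Rᵐᵒᵖ R) (hJ0 : (J0 : Set R).Finite) :
    ∃ J : Submodule Rᵐᵒᵖ R, (J : Set R).Finite ∧
      (∀ (r x : R), x ∈ J → r * x ∈ J) ∧ J0 ≤ J ∧ ∀ v ∈ M, ∀ i, v i ∈ J := by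
  classical
  set I : Submodule Rᵐᵒᵖ R :=
    J0 ⊔ Finset.univ.sup (fun i : Fin k => M.map (LinearMap.proj i)) with hI
  have hIfin : (I : Set R).Finite := by
    refine finite_sup _ _ hJ0 (finite_finsetSup _ _ fun i => ?_)
    rw [Submodule.map_coe]
    exact hM.image _
  have hspan := hsb I hIfin
  refine ⟨tsiToRight (TwoSidedIdeal.span (I : Set R)), hspan, ?_, ?_, ?_⟩
  · intro r x hx
    exact (TwoSidedIdeal.span (I : Set R)).mul_mem_left r x hx
  · intro x hx
    exact TwoSidedIdeal.subset_span (Submodule.mem_sup_left hx)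
  · intro v hv i
    refine TwoSidedIdeal.subset_span ?_
    refine Submodule.mem_sup_right ?_
    have : M.map (LinearMap.proj i) ≤
        Finset.univ.sup (fun i : Fin k => M.map (LinearMap.proj i)) :=
      Finset.le_sup (f := fun i : Fin k => M.map (LinearMap.proj (R := Rᵐᵒᵖ) i))
        (Finset.mem_univ i)
    exact this ⟨v, hv, rfl⟩

private lemma pi_eq_zero_iff (T : TwoSidedIdeal R) (z : R) :
    RingCon.mk' T.ringCon z = 0 ↔ z ∈ T := by
  constructor
  · intro h
    simpa using T.rel_iff z 0 |>.1 (Quotient.eq''.1 h)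
  · intro h
    exact Quotient.sound' (T.rel_iff z 0 |>.2 (by simpa using h))

private lemma pi_surj (T : TwoSidedIdeal R) :
    Function.Surjective (RingCon.mk' T.ringCon) := fun q =>
  Quotient.inductionOn' q fun r => ⟨r, rfl⟩

private lemma infinite_quot [Infinite R] (T : TwoSidedIdeal R)
    (hT : (T : Set R).Finite) : Infinite T.ringCon.Quotient := by
  by_contra h
  rw [not_infinite_iff_finite] at h
  haveI := hT.to_subtype
  set π := RingCon.mk' T.ringCon with hπ
  have key : Function.Injective
      (fun x : R => ((π x : T.ringCon.Quotient),
        (⟨x - (π x).out, by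
          have h1 : π ((π x).out) = π x := Quotient.out_eq' _
          exact T.rel_iff x ((π x).out) |>.1 (Quotient.eq''.1 h1.symm)⟩ :
          (T : Set R)))) := by
    intro a b hab
    have h1 : π a = π b := congrArg Prod.fst hab
    have h2 : a - (π a).out = b - (π b).out :=
      congrArg Subtype.val (congrArg Prod.snd hab)
    rw [h1] at h2
    exact sub_left_injective h2
  haveI := Finite.of_injective _ key
  exact not_finite R

/-- The matrix expansion of a right-module map between free modules. -/
private lemma apply_eq_sum {n m : ℕ} (f : (Fin n → R) →ₗ[Rᵐᵒᵖ] (Fin m → R))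
    (x : Fin n → R) (i : Fin m) :
    f x i = ∑ j, f (Pi.single j 1) i * x j := by
  have hx : x = ∑ j, (op (x j)) • Pi.single j (1 : R) := by
    rw [← Finset.univ_sum_single x]
    refine Finset.sum_congr rfl fun j _ => ?_
    funext i
    rcases eq_or_ne i j with rfl | h
    · simp [op_smul_eq_mul]
    · simp [Pi.single_eq_of_ne h, op_smul_eq_mul]
  conv_lhs => rw [hx]
  rw [map_sum]
  simp [op_smul_eq_mul]

end Aux

/-- A size-balanced infinite (right) noetherian ring is
`n`-rigid for every positive integer `n`. -/
theorem sizeBalanced_noetherian_isRigid (R : Type*) [Ring R] [Infinite R]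
    [IsNoetherian Rᵐᵒᵖ R] (hsb : SizeBalanced R) :
    ∀ n : ℕ, 1 ≤ n → IsRigid R n := by
  intro n hn f
  by_contra hKinf
  rw [Set.not_infinite] at hKinf
  classical
  -- The family of finite, two-sided right submodules containing all
  -- coordinates of elements of the kernel.
  set 𝒮 : Set (Submodule Rᵐᵒᵖ R) :=
    {N | (N : Set R).Finite ∧ (∀ (r x : R), x ∈ N → r * x ∈ N) ∧
      ∀ v ∈ LinearMap.ker f, ∀ i, v i ∈ N} with h𝒮
  have h𝒮ne : 𝒮.Nonempty := by
    obtain ⟨J1, hfin, hleft, -, hcoord⟩ :=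
      exists_ideal hsb (LinearMap.ker f) hKinf ⊥ (by simp)
    exact ⟨J1, hfin, hleft, hcoord⟩
  obtain ⟨J, hJ𝒮, hJmax⟩ :=
    (set_has_maximal_iff_noetherian.mpr (inferInstance : IsNoetherian Rᵐᵒᵖ R)) 𝒮 h𝒮ne
  obtain ⟨hJfin, hJleft, hJker⟩ := hJ𝒮
  -- Package `J` as a two-sided ideal and form the quotient ring.
  set T : TwoSidedIdeal R := TwoSidedIdeal.mk' (J : Set R) J.zero_mem
    (fun h1 h2 => J.add_mem h1 h2) (fun h => J.neg_mem h)
    (fun {r x} h => hJleft r x h)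
    (fun {x r} h => by
      simpa [MulOpposite.smul_eq_mul_unop] using J.smul_mem (op r) h) with hT
  have hmemT : ∀ z : R, z ∈ T ↔ z ∈ J := fun z =>
    TwoSidedIdeal.mem_mk' _ _ _ _ _ _ z
  set Q := T.ringCon.Quotient with hQ
  set π : R →+* Q := RingCon.mk' T.ringCon with hπdef
  haveI hQinf : Infinite Q := infinite_quot T (by
    show ((T : Set R)).Finite
    rw [TwoSidedIdeal.coe_mk']
    exact hJfin)
  haveI : Nontrivial Q := inferInstance
  haveI : IsNoetherianRing Rᵐᵒᵖ := isNoetherian_of_linearEquiv (opEquivMop R)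
  haveI : IsNoetherianRing Qᵐᵒᵖ := by
    refine isNoetherianRing_of_surjective Rᵐᵒᵖ Qᵐᵒᵖ (RingHom.op π) ?_
    intro q
    obtain ⟨r, hr⟩ := pi_surj T q.unop
    exact ⟨op r, by simp [hπdef, hr]⟩
  haveI : StrongRankCondition Qᵐᵒᵖ := inferInstance
  -- The induced map on the quotient.
  set A : Fin (n - 1) → Fin n → R := fun i j => f (Pi.single j 1) i with hA
  set g : (Fin n → Qᵐᵒᵖ) →ₗ[Qᵐᵒᵖ] (Fin (n - 1) → Qᵐᵒᵖ) :=
    { toFun := fun y i => ∑ j, y j * op (π (A i j))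
      map_add' := fun y z => by
        funext i
        simp [add_mul, Finset.sum_add_distrib]
      map_smul' := fun c y => by
        funext i
        simp [Finset.mul_sum, mul_assoc]
        rw [Finset.mul_sum] } with hg
  -- `g` is not injective by the strong rank condition.
  have hginj : ¬ Function.Injective g := by
    intro hinj
    have := le_of_fin_injective Qᵐᵒᵖ g hinj
    omega
  -- Extract a nonzero kernel element and lift it to `R`.
  obtain ⟨y, hy0, hygy⟩ : ∃ y : Fin n → Qᵐᵒᵖ, y ≠ 0 ∧ g y = 0 := by
    rw [Function.not_injective_iff] at hginj
    obtain ⟨a, b, hab, hne⟩ := hginj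
    exact ⟨a - b, sub_ne_zero.mpr hne, by rw [map_sub, hab, sub_self]⟩
  have hlift : ∀ j, ∃ r : R, π r = unop (y j) := fun j => pi_surj T _
  choose x hx using hlift
  have hyx : ∀ j, y j = op (π (x j)) := fun j => by rw [hx j, op_unop]
  -- The coordinates of `f x` lie in `J`, and some coordinate of `x` is not in `J`.
  have hfxJ : ∀ i, f x i ∈ J := by
    intro i
    have hgyi : g y i = op (π (f x i)) := by
      show (∑ j, y j * op (π (A i j))) = op (π (f x i))
      have h1 : π (f x i) = ∑ j, π (A i j) * π (x j) := by
        rw [apply_eq_sum f x i, map_sum (π : R →+* Q)]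
        exact Finset.sum_congr rfl fun j _ => map_mul π _ _
      rw [h1]
      have hopsum := map_sum (MulOpposite.opAddEquiv (α := Q))
        (fun j => π (A i j) * π (x j)) Finset.univ
      simp only [MulOpposite.opAddEquiv_apply] at hopsum
      rw [hopsum]
      refine Finset.sum_congr rfl fun j _ => ?_
      rw [hyx j, ← op_mul]
    have : op (π (f x i)) = 0 := by
      rw [← hgyi, hygy]; rfl
    have hz : π (f x i) = 0 := by
      have := congrArg unop this
      simpa using this
    rw [← hmemT]
    exact (pi_eq_zero_iff T _).1 hz
  obtain ⟨j0, hj0⟩ : ∃ j, x j ∉ J := by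
    have : ∃ j, y j ≠ 0 := by
      by_contra hall
      push_neg at hall
      exact hy0 (funext hall)
    obtain ⟨j, hj⟩ := this
    refine ⟨j, fun hmem => hj ?_⟩
    rw [hyx j, (pi_eq_zero_iff T _).2 ((hmemT _).2 hmem)]
    rfl
  -- `x` lies in the finite submodule `f⁻¹(Jⁿ⁻¹)`.
  set Lsub : Submodule Rᵐᵒᵖ (Fin n → R) :=
    Submodule.comap f (Submodule.pi Set.univ fun _ : Fin (n - 1) => J) with hLsub
  have hxL : x ∈ Lsub := by
    rw [Submodule.mem_comap, Submodule.mem_pi]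
    exact fun i _ => hfxJ i
  have fiber_fin : ∀ w : Fin (n - 1) → R, {v : Fin n → R | f v = w}.Finite := by
    intro w
    rcases Set.eq_empty_or_nonempty {v : Fin n → R | f v = w} with h | ⟨v₀, hv₀⟩
    · rw [h]; exact Set.finite_empty
    · refine Set.Finite.of_finite_image (f := fun v => v - v₀) ?_ ?_
      · refine hKinf.subset ?_
        rintro _ ⟨v, hv, rfl⟩
        simp only [SetLike.mem_coe, LinearMap.mem_ker, map_sub]
        rw [Set.mem_setOf_eq] at hv hv₀
        rw [hv, hv₀, sub_self]
      · intro a _ b _ h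
        exact sub_left_injective h
  have hLfin : (Lsub : Set (Fin n → R)).Finite := by
    have hpi : (Set.pi Set.univ fun _ : Fin (n - 1) => (J : Set R)).Finite :=
      Set.Finite.pi fun _ => hJfin
    refine (hpi.biUnion fun w _ => fiber_fin w).subset ?_
    intro v hv
    rw [Set.mem_iUnion]
    refine ⟨f v, ?_⟩
    rw [Set.mem_iUnion]
    refine ⟨?_, rfl⟩
    intro i _
    rw [SetLike.mem_coe] at hv
    rw [Submodule.mem_comap, Submodule.mem_pi] at hv
    exact hv i trivial
  -- Enlarge `J` using the finite right submodule generated by `x`.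
  set M : Submodule Rᵐᵒᵖ (Fin n → R) := Submodule.span Rᵐᵒᵖ {x} with hM
  have hMle : M ≤ Lsub := Submodule.span_le.mpr (by simp [hxL])
  have hMfin : (M : Set (Fin n → R)).Finite := hLfin.subset hMle
  obtain ⟨J', hJ'fin, hJ'left, hJJ', hJ'coord⟩ := exists_ideal hsb M hMfin J hJfin
  have hJ'𝒮 : J' ∈ 𝒮 :=
    ⟨hJ'fin, hJ'left, fun v hv i => hJJ' (hJker v hv i)⟩
  have hxJ' : x j0 ∈ J' :=
    hJ'coord x (Submodule.subset_span rfl) j0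
  exact hJmax J' hJ'𝒮 (lt_of_le_of_ne hJJ' fun h => hj0 (h ▸ hxJ'))
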